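/- Let ρ : [0,1] → dom f be a searching path via regularization with penalty ψ and tuner λ, where in addition the set of minimizers of ψ is nonempty. Then the ultimate region V⁺_f(ρ) = ⋂_{t ∈ [0,1]} U⁺_f(ρ(t)) has nonempty interior. -/

import Mathlib

open scoped RealInnerProductSpace

open Set Metric

lemma sum_rule_sep {E : Type*} [NormedAddCommGroup E] [InnerProductSpace ℝ E]
    [CompleteSpace E]
    (D : Set E) (F ψ : E → ℝ) (hψc : Continuous ψ)
    (hψ : ConvexOn ℝ Set.univ ψ)
    (hF : ConvexOn ℝ D F)
    (lam : ℝ) (hlam : 0 < lam) (x : E) (hx : x ∈ D)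
    (hmin : ∀ z ∈ D, lam * (ψ x - ψ z) ≤ F z - F x) :
    ∃ Hv : E, (∀ z ∈ D, ⟪Hv, z - x⟫ ≤ F z - F x) ∧
      (∀ z : E, lam * (ψ x - ψ z) ≤ ⟪Hv, z - x⟫) := by
  classical
  set O : Set (E × ℝ) := {p | p.2 < lam * (ψ x - ψ p.1) + F x} with hO_def
  set C : Set (E × ℝ) := {p | p.1 ∈ D ∧ F p.1 ≤ p.2} with hC_def
  have hOopen : IsOpen O := by
    apply isOpen_lt continuous_snd
    exact (continuous_const.mul (continuous_const.sub (hψc.comp continuous_fst))).add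
      continuous_const
  have hOconv : Convex ℝ O := by
    intro p hp q hq a b ha hb hab
    simp only [hO_def, mem_setOf_eq] at hp hq ⊢
    have h1 : ψ (a • p.1 + b • q.1) ≤ a * ψ p.1 + b * ψ q.1 := by
      simpa [smul_eq_mul] using hψ.2 (mem_univ p.1) (mem_univ q.1) ha hb hab
    have hsnd : (a • p + b • q).2 = a * p.2 + b * q.2 := rfl
    have hfst : (a • p + b • q).1 = a • p.1 + b • q.1 := rfl
    rw [hsnd, hfst]
    rcases eq_or_lt_of_le ha with ha0 | hapos
    · have hb1 : b = 1 := by linarith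
      simp only [← ha0, hb1] at *
      simpa using hq
    · rcases eq_or_lt_of_le hb with hb0 | hbpos
      · have ha1 : a = 1 := by linarith
        simp only [← hb0, ha1] at *
        simpa using hp
      · have h2 : a * p.2 < a * (lam * (ψ x - ψ p.1) + F x) :=
          (mul_lt_mul_iff_right₀ hapos).mpr hp
        have h3 : b * q.2 < b * (lam * (ψ x - ψ q.1) + F x) :=
          (mul_lt_mul_iff_right₀ hbpos).mpr hq
        have h4 : lam * (ψ x - (a * ψ p.1 + b * ψ q.1)) ≤
            lam * (ψ x - ψ (a • p.1 + b • q.1)) :=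
          mul_le_mul_of_nonneg_left (by linarith) hlam.le
        have h5 : a * (lam * (ψ x - ψ p.1)) + b * (lam * (ψ x - ψ q.1)) =
            lam * (ψ x - (a * ψ p.1 + b * ψ q.1)) := by
          linear_combination lam * ψ x * hab
        have h6 : a * F x + b * F x = F x := by linear_combination F x * hab
        nlinarith [h2, h3, h4, h5, h6]
  have hCconv : Convex ℝ C := by
    intro p hp q hq a b ha hb hab
    simp only [hC_def, mem_setOf_eq] at hp hq ⊢
    constructor
    · exact hF.1 hp.1 hq.1 ha hb hab
    · have h1 : F (a • p.1 + b • q.1) ≤ a * F p.1 + b * F q.1 := by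
        simpa [smul_eq_mul] using hF.2 hp.1 hq.1 ha hb hab
      have h2 : a * F p.1 ≤ a * p.2 := mul_le_mul_of_nonneg_left hp.2 ha
      have h3 : b * F q.1 ≤ b * q.2 := mul_le_mul_of_nonneg_left hq.2 hb
      have hsnd : (a • p + b • q).2 = a * p.2 + b * q.2 := rfl
      have hfst : (a • p + b • q).1 = a • p.1 + b • q.1 := rfl
      rw [hsnd, hfst]; linarith
  have hdisj : Disjoint O C := by
    rw [Set.disjoint_left]
    rintro p hpO hpC
    simp only [hO_def, mem_setOf_eq] at hpO
    simp only [hC_def, mem_setOf_eq] at hpC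
    have := hmin p.1 hpC.1
    linarith [hpC.2]
  obtain ⟨φf, u, hfO, hfC⟩ := geometric_hahn_banach_open hOconv hOopen hCconv hdisj
  set β : ℝ := φf (0, 1) with hβ_def
  have hsplit : ∀ (z : E) (r : ℝ), φf (z, r) = φf (z, 0) + r * β := by
    intro z r
    have h : ((z, r) : E × ℝ) = (z, 0) + r • ((0 : E), (1 : ℝ)) := by
      ext <;> simp
    rw [h, map_add, map_smul, smul_eq_mul]
  have hO' : ∀ (z : E) (r : ℝ), r < lam * (ψ x - ψ z) + F x → φf (z, 0) + r * β < u := by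
    intro z r hr
    have := hfO (z, r) (by simpa [hO_def] using hr)
    rwa [hsplit] at this
  have hC' : ∀ z ∈ D, u ≤ φf (z, 0) + F z * β := by
    intro z hz
    have := hfC (z, F z) (by simp [hC_def, hz])
    rwa [hsplit] at this
  have hβ0 : 0 ≤ β := by
    by_contra hcon
    push_neg at hcon
    set M : ℝ := max 1 ((u - φf (x, 0) - F x * β) / (-β)) with hM_def
    have hMpos : 0 < M := lt_of_lt_of_le one_pos (le_max_left _ _)
    have hMkey : u - φf (x, 0) - F x * β ≤ M * (-β) := by
      have := le_max_right 1 ((u - φf (x, 0) - F x * β) / (-β))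
      rwa [div_le_iff₀ (by linarith : (0:ℝ) < -β)] at this
    have h1 := hO' x (F x - M) (by
      have : ψ x - ψ x = 0 := sub_self _
      rw [this, mul_zero, zero_add]
      linarith)
    nlinarith
  have hβpos : 0 < β := by
    rcases hβ0.eq_or_lt with heq | h
    · exfalso
      have hzlt : ∀ z : E, φf (z, 0) < u := by
        intro z
        have := hO' z (lam * (ψ x - ψ z) + F x - 1) (by linarith)
        rw [← heq] at this
        linarith [this]
      have hle0 : ∀ z : E, φf (z, 0) ≤ 0 := by
        intro z
        by_contra hcon
        push_neg at hcon
        set c : ℝ := (|u| + 1) / φf (z, 0) with hc_def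
        have hcpos : 0 < c := div_pos (by positivity) hcon
        have h1 : φf (c • z, 0) = c * φf (z, 0) := by
          have h : ((c • z, (0 : ℝ)) : E × ℝ) = c • ((z, (0:ℝ)) : E × ℝ) := by
            ext <;> simp
          rw [h, map_smul, smul_eq_mul]
        have h2 := hzlt (c • z)
        rw [h1, hc_def, div_mul_cancel₀ _ (ne_of_gt hcon)] at h2
        have : u ≤ |u| := le_abs_self u
        linarith
      have hzero : φf (x, 0) = 0 := by
        have h1 := hle0 x
        have h2 := hle0 (-x)
        have h3 : φf (-x, 0) = -φf (x, 0) := by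
          have h : ((-x, (0 : ℝ)) : E × ℝ) = -((x, (0:ℝ)) : E × ℝ) := by ext <;> simp
          rw [h, map_neg]
        linarith [h3 ▸ h2]
      have h4 := hC' x hx
      rw [← heq, mul_zero, add_zero, hzero] at h4
      have h5 := hzlt x
      rw [hzero] at h5
      linarith
    · exact h
  have hkey2 : ∀ z : E, φf (z, 0) + (lam * (ψ x - ψ z) + F x) * β ≤ u := by
    intro z
    by_contra hcon
    push_neg at hcon
    set k : ℝ := lam * (ψ x - ψ z) + F x with hk_def
    set ε : ℝ := (φf (z, 0) + k * β - u) / (2 * β) with hε_def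
    have hεpos : 0 < ε := div_pos (by linarith) (by linarith)
    have h1 := hO' z (k - ε) (by linarith)
    have h2 : ε * β = (φf (z, 0) + k * β - u) / 2 := by
      rw [hε_def, div_mul_eq_mul_div, div_eq_div_iff (by positivity) (by norm_num)]
      ring
    nlinarith
  set Hv : E := (InnerProductSpace.toDual ℝ E).symm
    ((-β⁻¹) • (φf.comp (ContinuousLinearMap.inl ℝ E ℝ))) with hHv_def
  have hHv : ∀ w : E, ⟪Hv, w⟫ = -β⁻¹ * φf (w, 0) := by
    intro w
    rw [hHv_def, InnerProductSpace.toDual_symm_apply]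
    simp [ContinuousLinearMap.comp_apply]
  have hdiff : ∀ z : E, φf (z - x, 0) = φf (z, 0) - φf (x, 0) := by
    intro z
    have h : ((z - x, (0 : ℝ)) : E × ℝ) = ((z, (0:ℝ)) : E × ℝ) - ((x, (0:ℝ)) : E × ℝ) := by
      ext <;> simp
    rw [h, map_sub]
  have hkey2x : φf (x, 0) + F x * β ≤ u := by
    have := hkey2 x
    rw [sub_self, mul_zero, zero_add] at this
    exact this
  have hβinv : 0 < β⁻¹ := inv_pos.mpr hβpos
  refine ⟨Hv, ?_, ?_⟩
  · intro z hz
    rw [hHv, hdiff]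
    have h1 := hC' z hz
    have h3 : φf (x, 0) - φf (z, 0) ≤ (F z - F x) * β := by nlinarith
    have h4 := mul_le_mul_of_nonneg_left h3 hβinv.le
    rw [mul_comm (F z - F x) β, ← mul_assoc, inv_mul_cancel₀ (ne_of_gt hβpos), one_mul] at h4
    linarith
  · intro z
    rw [hHv, hdiff]
    have h1 := hkey2 z
    have h2 := hC' x hx
    have h3 : lam * (ψ x - ψ z) * β ≤ φf (x, 0) - φf (z, 0) := by nlinarith
    have h4 := mul_le_mul_of_nonneg_left h3 hβinv.le
    rw [mul_comm (lam * (ψ x - ψ z)) β, ← mul_assoc, inv_mul_cancel₀ (ne_of_gt hβpos), one_mul] at h4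
    linarith



/-- the ultimate region V⁺_f(ρ) of a path via regularization has nonempty interior. -/
theorem statement_5 (n : ℕ) (hn : 1 ≤ n)
    (f : EuclideanSpace ℝ (Fin n) → EReal)
    -- f is convex
    (hf_conv : ∀ x y : EuclideanSpace ℝ (Fin n), ∀ a b : ℝ, 0 ≤ a → 0 ≤ b → a + b = 1 →
      f (a • x + b • y) ≤ (a : EReal) * f x + (b : EReal) * f y)
    -- f is proper: never −∞ and finite somewhere
    (hf_nebot : ∀ x, f x ≠ ⊥)
    (hf_proper : ∃ x, f x ≠ ⊤)
    -- the set of minimizers of f is nonempty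
    (hf_argmin : ∃ x, ∀ y, f x ≤ f y)
    -- the effective domain of f is open
    (hf_domopen : IsOpen {x : EuclideanSpace ℝ (Fin n) | f x ≠ ⊤})
    -- ψ is a finite-valued convex function
    (ψ : EuclideanSpace ℝ (Fin n) → ℝ) (hψ_conv : ConvexOn ℝ Set.univ ψ)
    -- ρ is a searching path
    (ρ : ℝ → EuclideanSpace ℝ (Fin n))
    (hρ_cont : ContinuousOn ρ (Set.Icc 0 1))
    (hρ_dom : ∀ t ∈ Set.Icc (0:ℝ) 1, f (ρ t) ≠ ⊤)
    -- λ is positive-valued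
    (lam : ℝ → ℝ) (hlam : ∀ t ∈ Set.Icc (0:ℝ) 1, 0 < lam t)
    -- ρ is via regularization: for every t ∈ [0,1], ρ(t) minimizes f + λ(t)·ψ
    (hreg : ∀ t ∈ Set.Icc (0:ℝ) 1, ∀ y,
      f (ρ t) + ((lam t * ψ (ρ t) : ℝ) : EReal) ≤ f y + ((lam t * ψ y : ℝ) : EReal))
    -- the set of minimizers of ψ is nonempty
    (hψ_argmin : ∃ b, ∀ y, ψ b ≤ ψ y) :
    (interior (⋂ t ∈ Set.Icc (0:ℝ) 1, {y : EuclideanSpace ℝ (Fin n) |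
      ∃ xs : EuclideanSpace ℝ (Fin n), (∀ z, f (ρ t) + ((⟪xs, z - ρ t⟫ : ℝ) : EReal) ≤ f z) ∧
        0 ≤ ⟪xs, y - ρ t⟫})).Nonempty := by

  classical
  obtain ⟨x₀, hx₀⟩ := hf_proper
  set D : Set (EuclideanSpace ℝ (Fin n)) := {x | f x ≠ ⊤} with hD_def
  set F : EuclideanSpace ℝ (Fin n) → ℝ := fun x => (f x).toReal with hF_def
  have hfreal : ∀ x ∈ D, ((F x : ℝ) : EReal) = f x := fun x hx =>
    EReal.coe_toReal hx (hf_nebot x)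
  have hDconv : Convex ℝ D := by
    intro x hx y hy a b ha hb hab
    have h := hf_conv x y a b ha hb hab
    rw [← hfreal x hx, ← hfreal y hy, ← EReal.coe_mul, ← EReal.coe_mul, ← EReal.coe_add] at h
    have : f (a • x + b • y) < ⊤ := lt_of_le_of_lt h (EReal.coe_lt_top _)
    exact ne_of_lt this
  have hFconv : ConvexOn ℝ D F := by
    refine ⟨hDconv, ?_⟩
    intro x hx y hy a b ha hb hab
    have h := hf_conv x y a b ha hb hab
    have hmem : a • x + b • y ∈ D := hDconv hx hy ha hb hab
    rw [← hfreal x hx, ← hfreal y hy, ← hfreal _ hmem, ← EReal.coe_mul, ← EReal.coe_mul,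
      ← EReal.coe_add, EReal.coe_le_coe_iff] at h
    simpa [smul_eq_mul] using h
  have hFcont : ContinuousOn F D := ConvexOn.continuousOn hf_domopen hFconv
  have hψcont : Continuous ψ := by
    have := ConvexOn.continuousOn isOpen_univ hψ_conv
    rwa [continuousOn_univ] at this
  by_cases hP : ∃ p : EuclideanSpace ℝ (Fin n), (∀ z, f p ≤ f z) ∧ (∀ z, ψ p ≤ ψ z)
  · -- trivial case: the whole space works
    obtain ⟨p, hpf, hpψ⟩ := hP
    have hpD : p ∈ D := by
      have : f p < ⊤ := lt_of_le_of_lt (hpf x₀) (lt_top_iff_ne_top.mpr hx₀)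
      exact ne_of_lt this
    have hall : ∀ y : EuclideanSpace ℝ (Fin n), y ∈ ⋂ t ∈ Set.Icc (0:ℝ) 1, {y : EuclideanSpace ℝ (Fin n) |
        ∃ xs : EuclideanSpace ℝ (Fin n), (∀ z, f (ρ t) + ((⟪xs, z - ρ t⟫ : ℝ) : EReal) ≤ f z) ∧
          0 ≤ ⟪xs, y - ρ t⟫} := by
      intro y
      simp only [Set.mem_iInter, mem_setOf_eq]
      intro t ht
      have hxD : ρ t ∈ D := hρ_dom t ht
      have hmain : ∀ z, f (ρ t) ≤ f z := by
        intro z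
        have hr := hreg t ht p
        rw [← hfreal _ hxD, ← hfreal _ hpD, ← EReal.coe_add, ← EReal.coe_add,
          EReal.coe_le_coe_iff] at hr
        have h2 : lam t * ψ p ≤ lam t * ψ (ρ t) :=
          mul_le_mul_of_nonneg_left (hpψ (ρ t)) (hlam t ht).le
        have h3 : F (ρ t) ≤ F p := by linarith
        calc f (ρ t) = ((F (ρ t) : ℝ) : EReal) := (hfreal _ hxD).symm
          _ ≤ ((F p : ℝ) : EReal) := by exact_mod_cast h3
          _ = f p := hfreal _ hpD
          _ ≤ f z := hpf z
      refine ⟨0, ?_, ?_⟩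
      · intro z
        have h0 : ⟪(0:EuclideanSpace ℝ (Fin n)), z - ρ t⟫ = 0 := inner_zero_left _
        rw [h0]
        simpa using hmain z
      · simp [inner_zero_left]
    have heq : (⋂ t ∈ Set.Icc (0:ℝ) 1, {y : EuclideanSpace ℝ (Fin n) |
        ∃ xs : EuclideanSpace ℝ (Fin n), (∀ z, f (ρ t) + ((⟪xs, z - ρ t⟫ : ℝ) : EReal) ≤ f z) ∧
          0 ≤ ⟪xs, y - ρ t⟫}) = univ := eq_univ_of_forall hall
    rw [heq, interior_univ]
    exact ⟨0, trivial⟩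
  · -- main case
    obtain ⟨xh, hxh⟩ := hf_argmin
    obtain ⟨b, hb⟩ := hψ_argmin
    have hxhD : xh ∈ D := by
      have : f xh < ⊤ := lt_of_le_of_lt (hxh x₀) (lt_top_iff_ne_top.mpr hx₀)
      exact ne_of_lt this
    set K : Set (EuclideanSpace ℝ (Fin n)) := ρ '' (Set.Icc 0 1) with hK_def
    have hK : IsCompact K := isCompact_Icc.image_of_continuousOn hρ_cont
    have hKne : K.Nonempty := ⟨ρ 0, mem_image_of_mem ρ (by constructor <;> norm_num)⟩
    have hKD : K ⊆ D := by rintro _ ⟨t, ht, rfl⟩; exact hρ_dom t ht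
    obtain ⟨ε₀, hε₀, hTD⟩ := hK.exists_cthickening_subset_open hf_domopen hKD
    set T : Set (EuclideanSpace ℝ (Fin n)) := cthickening ε₀ K with hT_def
    have hTcomp : IsCompact T := hK.cthickening
    have hKT : K ⊆ T := self_subset_cthickening K
    have hTne : T.Nonempty := hKne.mono hKT
    obtain ⟨pM, hpMT, hpM⟩ := hTcomp.exists_isMaxOn hTne (hFcont.mono hTD)
    obtain ⟨pm, hpmT, hpm⟩ := hTcomp.exists_isMinOn hTne (hFcont.mono hTD)
    obtain ⟨qM, hqMT, hqM⟩ := hTcomp.exists_isMaxOn hTne hψcont.continuousOn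
    obtain ⟨qm, hqmT, hqm⟩ := hTcomp.exists_isMinOn hTne hψcont.continuousOn
    set L : ℝ := max ((F pM - F pm) / ε₀) 1 with hL_def
    set Lψ : ℝ := max ((ψ qM - ψ qm) / ε₀) 1 with hLψ_def
    have hL1 : (1:ℝ) ≤ L := le_max_right _ _
    have hLψ1 : (1:ℝ) ≤ Lψ := le_max_right _ _
    set φfun : ℝ → ℝ := fun t => max (ψ (ρ t) - ψ b) (F (ρ t) - F xh) with hφ_def
    have hφcont : ContinuousOn φfun (Set.Icc 0 1) := by
      apply ContinuousOn.sup
      · exact (hψcont.comp_continuousOn hρ_cont).sub continuousOn_const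
      · exact ((hFcont.comp hρ_cont (fun t ht => hρ_dom t ht)).sub continuousOn_const)
    obtain ⟨t₀, ht₀, hmin₀⟩ := isCompact_Icc.exists_isMinOn
      ⟨0, by constructor <;> norm_num⟩ hφcont
    set η : ℝ := φfun t₀ with hη_def
    have hη : 0 < η := by
      by_contra hcon
      push_neg at hcon
      apply hP
      refine ⟨ρ t₀, ?_, ?_⟩
      · intro z
        have h1 : F (ρ t₀) - F xh ≤ 0 := le_trans (le_max_right _ _) hcon
        have hxD : ρ t₀ ∈ D := hρ_dom t₀ ht₀
        calc f (ρ t₀) = ((F (ρ t₀) : ℝ) : EReal) := (hfreal _ hxD).symm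
          _ ≤ ((F xh : ℝ) : EReal) := by exact_mod_cast (by linarith : F (ρ t₀) ≤ F xh)
          _ = f xh := hfreal _ hxhD
          _ ≤ f z := hxh z
      · intro z
        have h1 : ψ (ρ t₀) - ψ b ≤ 0 := le_trans (le_max_left _ _) hcon
        linarith [hb z]
    set δ : ℝ := η / max L Lψ with hδ_def
    have hmaxpos : (0:ℝ) < max L Lψ := lt_of_lt_of_le one_pos (le_trans hL1 (le_max_left _ _))
    have hδpos : 0 < δ := div_pos hη hmaxpos
    have hmaxδ : max L Lψ * δ = η := by
      rw [hδ_def, mul_div_cancel₀ _ (ne_of_gt hmaxpos)]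
    set y₀ : EuclideanSpace ℝ (Fin n) := b + (b - xh) with hy₀_def
    refine ⟨y₀, ?_⟩
    rw [mem_interior]
    refine ⟨ball y₀ δ, ?_, isOpen_ball, mem_ball_self hδpos⟩
    intro y hy
    simp only [Set.mem_iInter, mem_setOf_eq]
    intro t ht
    have hxD : ρ t ∈ D := hρ_dom t ht
    have hlamt := hlam t ht
    have hmin_t : ∀ z ∈ D, lam t * (ψ (ρ t) - ψ z) ≤ F z - F (ρ t) := by
      intro z hz
      have hr := hreg t ht z
      rw [← hfreal _ hxD, ← hfreal _ hz, ← EReal.coe_add, ← EReal.coe_add,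
        EReal.coe_le_coe_iff] at hr
      nlinarith [hr]
    obtain ⟨Hv, hHv1, hHv2⟩ := sum_rule_sep D F ψ hψcont hψ_conv hFconv
      (lam t) hlamt (ρ t) hxD hmin_t
    have hxK : ρ t ∈ K := mem_image_of_mem ρ ht
    have hxT : ρ t ∈ T := hKT hxK
    -- norm bounds
    have hnormL : ‖Hv‖ ≤ L := by
      rcases eq_or_ne Hv 0 with h0 | h0
      · rw [h0, norm_zero]; linarith
      · have hnpos : 0 < ‖Hv‖ := norm_pos_iff.mpr h0
        set uu : EuclideanSpace ℝ (Fin n) := (ε₀ / ‖Hv‖) • Hv with huu_def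
        have hnu : ‖uu‖ = ε₀ := by
          rw [huu_def, norm_smul, Real.norm_eq_abs, abs_of_pos (div_pos hε₀ hnpos),
            div_mul_cancel₀ _ (ne_of_gt hnpos)]
        have hmemT : ρ t + uu ∈ T := by
          apply mem_cthickening_of_dist_le (ρ t + uu) (ρ t) ε₀ K hxK
          rw [dist_eq_norm]
          simp [hnu]
        have hmemD : ρ t + uu ∈ D := hTD hmemT
        have h1 := hHv1 _ hmemD
        rw [add_sub_cancel_left] at h1
        have h2 : ⟪Hv, uu⟫ = ε₀ * ‖Hv‖ := by
          rw [huu_def, real_inner_smul_right, real_inner_self_eq_norm_sq]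
          field_simp
        have h3 : F (ρ t + uu) ≤ F pM := hpM hmemT
        have h4 : F pm ≤ F (ρ t) := hpm hxT
        have h5 : ε₀ * ‖Hv‖ ≤ F pM - F pm := by linarith [h2 ▸ h1]
        have h6 : ‖Hv‖ ≤ (F pM - F pm) / ε₀ := by
          rw [le_div_iff₀ hε₀]; linarith
        exact le_trans h6 (le_max_left _ _)
    have hnormLψ : ‖Hv‖ ≤ lam t * Lψ := by
      rcases eq_or_ne Hv 0 with h0 | h0
      · rw [h0, norm_zero]; positivity
      · have hnpos : 0 < ‖Hv‖ := norm_pos_iff.mpr h0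
        set uu : EuclideanSpace ℝ (Fin n) := -((ε₀ / ‖Hv‖) • Hv) with huu_def
        have hnu : ‖uu‖ = ε₀ := by
          rw [huu_def, norm_neg, norm_smul, Real.norm_eq_abs, abs_of_pos (div_pos hε₀ hnpos),
            div_mul_cancel₀ _ (ne_of_gt hnpos)]
        have hmemT : ρ t + uu ∈ T := by
          apply mem_cthickening_of_dist_le (ρ t + uu) (ρ t) ε₀ K hxK
          rw [dist_eq_norm]
          simp [hnu]
        have h1 := hHv2 (ρ t + uu)
        rw [add_sub_cancel_left] at h1
        have h2 : ⟪Hv, uu⟫ = -(ε₀ * ‖Hv‖) := by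
          rw [huu_def, inner_neg_right, real_inner_smul_right, real_inner_self_eq_norm_sq]
          field_simp
        have h3 : ψ (ρ t + uu) ≤ ψ qM := hqM hmemT
        have h4 : ψ qm ≤ ψ (ρ t) := hqm hxT
        have h5 : ε₀ * ‖Hv‖ ≤ lam t * (ψ qM - ψ qm) := by nlinarith [h2 ▸ h1]
        have h6 : ‖Hv‖ ≤ lam t * ((ψ qM - ψ qm) / ε₀) := by
          rw [mul_div_assoc'] at *
          rw [le_div_iff₀ hε₀]
          linarith
        exact le_trans h6 (mul_le_mul_of_nonneg_left (le_max_left _ _) hlamt.le)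
    -- margin facts
    have hΔ : 0 ≤ ψ (ρ t) - ψ b := by linarith [hb (ρ t)]
    have hxhle : F xh ≤ F (ρ t) := by
      have h := hxh (ρ t)
      rw [← hfreal _ hxhD, ← hfreal _ hxD, EReal.coe_le_coe_iff] at h
      exact h
    have hα : lam t * (ψ (ρ t) - ψ b) ≤ ⟪Hv, b - ρ t⟫ := hHv2 b
    have hβ2 : ⟪Hv, xh - ρ t⟫ ≤ F xh - F (ρ t) := hHv1 xh hxhD
    have hw : ‖y - y₀‖ < δ := by
      rw [mem_ball, dist_eq_norm] at hy
      exact hy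
    have hsplit2 : y - ρ t = ((b - ρ t) + (b - ρ t) - (xh - ρ t)) + (y - y₀) := by
      rw [hy₀_def]; abel
    have hinner : ⟪Hv, y - ρ t⟫ =
        ⟪Hv, b - ρ t⟫ + ⟪Hv, b - ρ t⟫ - ⟪Hv, xh - ρ t⟫ + ⟪Hv, y - y₀⟫ := by
      rw [hsplit2, inner_add_right, inner_sub_right, inner_add_right]
    have hcs : -(‖Hv‖ * ‖y - y₀‖) ≤ ⟪Hv, y - y₀⟫ := by
      have := abs_real_inner_le_norm Hv (y - y₀)
      cases abs_le.mp this with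
      | intro h1 h2 => exact h1
    have hlamD : 0 ≤ lam t * (ψ (ρ t) - ψ b) := mul_nonneg hlamt.le hΔ
    have hfinal : 0 ≤ ⟪Hv, y - ρ t⟫ := by
      have hηφ : η ≤ φfun t := hmin₀ ht
      rcases le_max_iff.mp hηφ with hcase | hcase
      · -- η ≤ ψ (ρ t) - ψ b
        have e1 : ‖Hv‖ * ‖y - y₀‖ ≤ (lam t * Lψ) * δ :=
          mul_le_mul hnormLψ hw.le (norm_nonneg _) (by positivity)
        have e2 : Lψ * δ ≤ η := by
          calc Lψ * δ ≤ max L Lψ * δ :=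
                mul_le_mul_of_nonneg_right (le_max_right _ _) hδpos.le
            _ = η := hmaxδ
        have e3 : lam t * η ≤ lam t * (ψ (ρ t) - ψ b) :=
          mul_le_mul_of_nonneg_left hcase hlamt.le
        have e4 : lam t * (Lψ * δ) ≤ lam t * η := mul_le_mul_of_nonneg_left e2 hlamt.le
        have e5 : (lam t * Lψ) * δ = lam t * (Lψ * δ) := by ring
        linarith [hinner, hα, hβ2, hcs, e1, e3, e4, hxhle]
      · -- η ≤ F (ρ t) - F xh
        have e1 : ‖Hv‖ * ‖y - y₀‖ ≤ L * δ :=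
          mul_le_mul hnormL hw.le (norm_nonneg _) (by positivity)
        have e2 : L * δ ≤ η := by
          calc L * δ ≤ max L Lψ * δ :=
                mul_le_mul_of_nonneg_right (le_max_left _ _) hδpos.le
            _ = η := hmaxδ
        linarith [hinner, hα, hβ2, hcs, e1, hxhle]
    refine ⟨Hv, ?_, hfinal⟩
    intro z
    by_cases hz : z ∈ D
    · rw [← hfreal _ hxD, ← hfreal _ hz, ← EReal.coe_add, EReal.coe_le_coe_iff]
      linarith [hHv1 z hz]
    · have hzt : f z = ⊤ := not_not.mp hz
      rw [hzt]
      exact le_top
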